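/- For subspaces A, B, C, D, E, F of a finite-dimensional vector space V, I(A;B) + I(A;C) ≤ I(B;C) + I(A;D) + I(B;E|D) + I(C;F|D) + I(A;B|E) + I(A;C|F), where I(X;Y) = dim X + dim Y - dim(X+Y) and I(X;Y|T) = dim(X+T) + dim(Y+T) - dim(X+Y+T) - dim T. -/
import Mathlib


open Module

noncomputable def condH {F V : Type*} [Field F] [AddCommGroup V] [Module F V]
    (X Y : Submodule F V) : ℤ :=
  (finrank F ↑(X ⊔ Y) : ℤ) - finrank F ↑Y

noncomputable def mutI {F V : Type*} [Field F] [AddCommGroup V] [Module F V]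
    (X Y : Submodule F V) : ℤ :=
  (finrank F ↑X : ℤ) + finrank F ↑Y - finrank F ↑(X ⊔ Y)

noncomputable def condI {F V : Type*} [Field F] [AddCommGroup V] [Module F V]
    (X Y T : Submodule F V) : ℤ :=
  (finrank F ↑(X ⊔ T) : ℤ) + finrank F ↑(Y ⊔ T) - finrank F ↑(X ⊔ Y ⊔ T) - finrank F ↑T

lemma mutI_eq_inf {F V : Type*} [Field F] [AddCommGroup V] [Module F V] [FiniteDimensional F V]
    (X Y : Submodule F V) : mutI X Y = (finrank F ↑(X ⊓ Y) : ℤ) := by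
  have h := Submodule.finrank_sup_add_finrank_inf_eq X Y
  unfold mutI
  omega

lemma key {F V : Type*} [Field F] [AddCommGroup V] [Module F V] [FiniteDimensional F V]
    (W X Y T : Submodule F V) (hX : W ≤ X) (hY : W ≤ Y) :
    (finrank F ↑W : ℤ) - finrank F ↑(W ⊓ T) ≤ condI X Y T := by
  have h1 : W ⊔ T ≤ (X ⊔ T) ⊓ (Y ⊔ T) :=
    le_inf (sup_le_sup_right hX T) (sup_le_sup_right hY T)
  have h2 : finrank F ↑(W ⊔ T) ≤ finrank F ↑((X ⊔ T) ⊓ (Y ⊔ T)) :=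
    Submodule.finrank_mono h1
  have h3 := Submodule.finrank_sup_add_finrank_inf_eq (X ⊔ T) (Y ⊔ T)
  have h4 : (X ⊔ T) ⊔ (Y ⊔ T) = X ⊔ Y ⊔ T := by
    rw [sup_sup_sup_comm, sup_idem]
  rw [h4] at h3
  have h5 := Submodule.finrank_sup_add_finrank_inf_eq W T
  unfold condI
  omega

theorem stmt16 {F V : Type*} [Field F] [AddCommGroup V] [Module F V] [FiniteDimensional F V]
    (A B C D E G : Submodule F V) :
    mutI A B + mutI A C ≤
      mutI B C + mutI A D + condI B E D + condI C G D + condI A B E + condI A C G := by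
  have h1 : (finrank F ↑(A ⊓ B) : ℤ) - finrank F ↑(A ⊓ B ⊓ E) ≤ condI A B E :=
    key (A ⊓ B) A B E inf_le_left inf_le_right
  have h2 : (finrank F ↑(A ⊓ C) : ℤ) - finrank F ↑(A ⊓ C ⊓ G) ≤ condI A C G :=
    key (A ⊓ C) A C G inf_le_left inf_le_right
  have h3 : (finrank F ↑(A ⊓ B ⊓ E) : ℤ) - finrank F ↑(A ⊓ B ⊓ E ⊓ D) ≤ condI B E D :=
    key (A ⊓ B ⊓ E) B E D (le_trans inf_le_left inf_le_right) inf_le_right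
  have h4 : (finrank F ↑(A ⊓ C ⊓ G) : ℤ) - finrank F ↑(A ⊓ C ⊓ G ⊓ D) ≤ condI C G D :=
    key (A ⊓ C ⊓ G) C G D (le_trans inf_le_left inf_le_right) inf_le_right
  -- final modular step
  set X := A ⊓ B ⊓ E ⊓ D
  set Y := A ⊓ C ⊓ G ⊓ D
  have hXA : X ≤ A ⊓ D :=
    le_inf (le_trans inf_le_left (le_trans inf_le_left inf_le_left)) inf_le_right
  have hYA : Y ≤ A ⊓ D :=
    le_inf (le_trans inf_le_left (le_trans inf_le_left inf_le_left)) inf_le_right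
  have hXB : X ≤ B := le_trans inf_le_left (le_trans inf_le_left inf_le_right)
  have hYC : Y ≤ C := le_trans inf_le_left (le_trans inf_le_left inf_le_right)
  have h5 := Submodule.finrank_sup_add_finrank_inf_eq X Y
  have h6 : finrank F ↑(X ⊔ Y) ≤ finrank F ↑(A ⊓ D) :=
    Submodule.finrank_mono (sup_le hXA hYA)
  have h7 : finrank F ↑(X ⊓ Y) ≤ finrank F ↑(B ⊓ C) :=
    Submodule.finrank_mono (le_inf (le_trans inf_le_left hXB) (le_trans inf_le_right hYC))
  have e1 := mutI_eq_inf A B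
  have e2 := mutI_eq_inf A C
  have e3 := mutI_eq_inf B C
  have e4 := mutI_eq_inf A D
  omega
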